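/- Let F be a field and q ∈ F a nonzero element of infinite multiplicative order (q^k ≠ 1 for every nonzero integer k). Let r ∈ F be nonzero with r⁻¹ ≠ q and r⁻¹ ≠ −q⁻¹. Let ι be a nonempty finite type and e : ι → ℤ an injective function such that e(t) + e(s) ≠ 0 for all t ≠ s and such that e(t) ∉ {1, −1} for every t (so the eigenvalues q^{e(t)} of T are mutually distinct and none equals q^{±1}). Let T be the diagonal matrix with entries T_{tt} = q^{e(t)}, let A be an invertible ι×ι matrix, and let P be an ι×ι matrix of rank 1 with P² = P, AP = PA = r⁻¹·P, satisfying A − A⁻¹ = (q − q⁻¹)·1 − (r − r⁻¹ + q − q⁻¹)·P and T·A·T·A = 1. Then the F-subalgebra of the ι×ι matrix algebra generated by A and T is the full matrix algebra; in particular the corresponding representation of the affine braid group AB₂ is indecomposable. -/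

import Mathlib

open Matrix Polynomial

/-- Evaluating a polynomial at a diagonal matrix gives a diagonal matrix. -/
lemma aeval_diagonal_aux {F ι : Type*} [Field F] [Fintype ι] [DecidableEq ι]
    (d : ι → F) (p : F[X]) :
    Polynomial.aeval (Matrix.diagonal d) p
      = Matrix.diagonal (fun i => p.eval (d i)) := by
  have h1 : Matrix.diagonal d = Matrix.diagonalAlgHom F d := rfl
  rw [h1, Polynomial.aeval_algHom_apply]
  have h2 : (Polynomial.aeval d p : ι → F) = fun i => p.eval (d i) := by
    funext i
    calc (Polynomial.aeval d p : ι → F) i = Polynomial.aeval (d i) p :=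
          (Polynomial.aeval_algHom_apply (Pi.evalAlgHom F (fun _ : ι => F) i) d p).symm
      _ = p.eval (d i) := by simp
  rw [h2]
  rfl

/-- Under the assumptions of the previous statement, if moreover
the exponents `e t` are mutually distinct and none equals `±1`, then the
`F`-subalgebra of the matrix algebra generated by `A` and `T` is the full
matrix algebra (so the corresponding representation of `AB₂` is
indecomposable). -/
theorem stmt2 {F : Type*} [Field F] {ι : Type*} [Fintype ι] [DecidableEq ι]
    [Nonempty ι]
    (q r : F) (hq : q ≠ 0) (hr : r ≠ 0)
    (hord : ∀ k : ℤ, k ≠ 0 → q ^ k ≠ 1)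
    (hrq : r⁻¹ ≠ q) (hrq' : r⁻¹ ≠ -q⁻¹)
    (e : ι → ℤ) (hinj : Function.Injective e)
    (he : ∀ t s : ι, t ≠ s → e t + e s ≠ 0)
    (he1 : ∀ t : ι, e t ≠ 1 ∧ e t ≠ -1)
    (T A P : Matrix ι ι F)
    (hT : T = Matrix.diagonal fun t => q ^ (e t))
    (hA : IsUnit A)
    (hP2 : P * P = P) (hPrank : P.rank = 1)
    (hAP : A * P = r⁻¹ • P) (hPA : P * A = r⁻¹ • P)
    (hrel : A - A⁻¹ = (q - q⁻¹) • (1 : Matrix ι ι F) - (r - r⁻¹ + q - q⁻¹) • P)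
    (hTATA : T * A * T * A = 1) :
    Algebra.adjoin F ({A, T} : Set (Matrix ι ι F)) = ⊤ := by
  classical
  -- basic nonvanishing facts
  have hq2 : q - q⁻¹ ≠ 0 := by
    intro h
    apply hord 2 two_ne_zero
    have hqq : q = q⁻¹ := sub_eq_zero.mp h
    rw [show (2 : ℤ) = 1 + 1 from rfl, zpow_add₀ hq, zpow_one]
    nth_rewrite 1 [hqq]
    exact inv_mul_cancel₀ hq
  have hm : r - r⁻¹ + q - q⁻¹ ≠ 0 := by
    intro h
    have hfac : (r - q⁻¹) * (r + q) = r * (r - r⁻¹ + q - q⁻¹) := by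
      field_simp
      ring
    rw [h, mul_zero] at hfac
    rcases mul_eq_zero.mp hfac with h1 | h1
    · apply hrq
      rw [sub_eq_zero.mp h1, inv_inv]
    · apply hrq'
      rw [eq_neg_of_add_eq_zero_left h1, inv_neg]
  have hAinv : A⁻¹ = T * A * T := Matrix.inv_eq_left_inv hTATA
  -- the entrywise relation
  have rel : ∀ t s, A t s * (1 - q ^ e t * q ^ e s)
      = (if t = s then q - q⁻¹ else 0) - (r - r⁻¹ + q - q⁻¹) * P t s := by
    intro t s
    have h := Matrix.ext_iff.mpr hrel t s
    rw [hAinv, hT] at h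
    simp only [Matrix.sub_apply, Matrix.smul_apply, Matrix.one_apply, smul_eq_mul,
      Matrix.mul_diagonal, Matrix.diagonal_mul] at h
    rcases eq_or_ne t s with hts | hts
    · rw [if_pos hts]
      rw [if_pos hts] at h
      linear_combination h
    · rw [if_neg hts]
      rw [if_neg hts] at h
      linear_combination h
  have hds : ∀ t s, t ≠ s → 1 - q ^ e t * q ^ e s ≠ 0 := by
    intro t s hts h
    refine hord (e t + e s) (he t s hts) ?_
    rw [zpow_add₀ hq]
    linear_combination -h
  -- the key contradiction lemma
  have key : ∀ t, P t t = 0 → (∀ s, s ≠ t → A t s * A s t = 0) → False := by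
    intro t hPtt hz
    have eq1 : A t t * (1 - q ^ e t * q ^ e t) = q - q⁻¹ := by
      have h := rel t t
      rw [if_pos rfl, hPtt, mul_zero, sub_zero] at h
      exact h
    have eq2 : (q ^ e t * A t t) * (q ^ e t * A t t) = 1 := by
      have h := Matrix.ext_iff.mpr hTATA t t
      rw [hT, Matrix.mul_apply] at h
      simp only [Matrix.mul_diagonal, Matrix.diagonal_mul, Matrix.one_apply_eq] at h
      rw [Finset.sum_eq_single t] at h
      · linear_combination h
      · intro k _ hk
        linear_combination (q ^ e t * q ^ e k) * hz k hk
      · intro hmem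
        exact absurd (Finset.mem_univ t) hmem
    have hsplit : (q ^ e t * A t t - 1) * (q ^ e t * A t t + 1) = 0 := by
      linear_combination eq2
    rcases mul_eq_zero.mp hsplit with hxa | hxa
    · have hxa' : q ^ e t * A t t = 1 := by linear_combination hxa
      have hfac : (q ^ e t - q⁻¹) * (q ^ e t + q) = 0 := by
        linear_combination (-(q ^ e t)) * eq1 + (1 - q ^ e t * q ^ e t) * hxa' - mul_inv_cancel₀ hq
      rcases mul_eq_zero.mp hfac with h1 | h1
      · apply hord (e t + 1) (by have := (he1 t).2; omega)
        rw [zpow_add_one₀ hq, sub_eq_zero.mp h1]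
        exact inv_mul_cancel₀ hq
      · apply hord (e t + e t - 2) (by have := (he1 t).1; omega)
        have hdt : q ^ e t = -q := eq_neg_of_add_eq_zero_left h1
        rw [zpow_sub₀ hq, zpow_add₀ hq, hdt,
          show (2 : ℤ) = 1 + 1 from rfl, zpow_add₀ hq, zpow_one]
        field_simp
    · have hxa' : q ^ e t * A t t = -1 := eq_neg_of_add_eq_zero_left hxa
      have hfac : (q ^ e t - q) * (q ^ e t + q⁻¹) = 0 := by
        linear_combination (q ^ e t) * eq1 - (1 - q ^ e t * q ^ e t) * hxa' - mul_inv_cancel₀ hq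
      rcases mul_eq_zero.mp hfac with h1 | h1
      · apply hord (e t - 1) (by have := (he1 t).1; omega)
        rw [zpow_sub₀ hq, zpow_one, sub_eq_zero.mp h1]
        exact div_self hq
      · apply hord (e t + e t + 2) (by have := (he1 t).2; omega)
        have hdt : q ^ e t = -q⁻¹ := eq_neg_of_add_eq_zero_left h1
        rw [zpow_add₀ hq, zpow_add₀ hq, hdt,
          show (2 : ℤ) = 1 + 1 from rfl, zpow_add₀ hq, zpow_one]
        field_simp
  -- vanishing of P entries forces vanishing of A entries off the diagonal
  have hAzero : ∀ t s, t ≠ s → P t s = 0 → A t s = 0 := by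
    intro t s hts hP
    have h := rel t s
    rw [if_neg hts, hP, mul_zero, sub_zero] at h
    exact (mul_eq_zero.mp h).resolve_right (hds t s hts)
  -- every row and every column of P contains a nonzero entry
  have rowP : ∀ t, ∃ s, P t s ≠ 0 := by
    intro t
    by_contra hcon
    push_neg at hcon
    exact key t (hcon t) fun s hs => by
      rw [hAzero t s hs.symm (hcon s), zero_mul]
  have colP : ∀ t, ∃ s, P s t ≠ 0 := by
    intro t
    by_contra hcon
    push_neg at hcon
    exact key t (hcon t) fun s hs => by
      rw [hAzero s t hs (hcon s), mul_zero]
  -- rank-one decomposition of P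
  have hrk : Module.finrank F (LinearMap.range P.mulVecLin) = 1 := hPrank
  obtain ⟨v0, hv0ne, hv0⟩ := finrank_eq_one_iff'.mp hrk
  have hPvw : ∃ w : ι → F, ∀ i j, P i j = (v0 : ι → F) i * w j := by
    choose c hc using fun j =>
      hv0 ⟨P.mulVec (Pi.single j 1), LinearMap.mem_range_self _ _⟩
    refine ⟨c, fun i j => ?_⟩
    have h1 := congrFun (congrArg Subtype.val (hc j)) i
    simp only [Submodule.coe_smul, Pi.smul_apply, smul_eq_mul,
      Matrix.mulVec_single, op_smul_eq_mul, Matrix.col_apply, mul_one] at h1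
    rw [← h1, mul_comm]
  obtain ⟨w, hw⟩ := hPvw
  -- all entries of P are nonzero
  have Pne : ∀ t s, P t s ≠ 0 := by
    intro t s
    obtain ⟨s0, h1⟩ := rowP t
    obtain ⟨t0, h2⟩ := colP s
    rw [hw] at h1 h2 ⊢
    exact mul_ne_zero (mul_ne_zero_iff.mp h1).1 (mul_ne_zero_iff.mp h2).2
  -- all off-diagonal entries of A are nonzero
  have Aoff : ∀ t s, t ≠ s → A t s ≠ 0 := by
    intro t s hts h0
    have h := rel t s
    rw [if_neg hts, h0, zero_mul] at h
    have : (r - r⁻¹ + q - q⁻¹) * P t s = 0 := by linear_combination h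
    exact mul_ne_zero hm (Pne t s) this
  -- now the generation argument
  have hAmem : A ∈ Algebra.adjoin F ({A, T} : Set (Matrix ι ι F)) :=
    Algebra.subset_adjoin (by simp)
  have hTmem : T ∈ Algebra.adjoin F ({A, T} : Set (Matrix ι ι F)) :=
    Algebra.subset_adjoin (by simp)
  have dinj : Set.InjOn (fun s : ι => q ^ e s) ↑(Finset.univ : Finset ι) := by
    intro a _ b _ hab
    apply hinj
    by_contra hne
    have hab' : q ^ e a = q ^ e b := hab
    exact hord (e a - e b) (sub_ne_zero.mpr hne)
      (by rw [zpow_sub₀ hq, hab', div_self (zpow_ne_zero _ hq)])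
  -- diagonal matrix units
  have Ediag : ∀ t, Matrix.single t t (1 : F)
      ∈ Algebra.adjoin F ({A, T} : Set (Matrix ι ι F)) := by
    intro t
    have hmem : Polynomial.aeval T (Lagrange.basis Finset.univ (fun s : ι => q ^ e s) t)
        ∈ Algebra.adjoin F ({A, T} : Set (Matrix ι ι F)) := by
      refine Algebra.adjoin_mono ?_ (Polynomial.aeval_mem_adjoin_singleton F T)
      intro x hx
      simp only [Set.mem_singleton_iff] at hx
      simp [hx]
    have heq : Polynomial.aeval T (Lagrange.basis Finset.univ (fun s : ι => q ^ e s) t)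
        = Matrix.single t t (1 : F) := by
      rw [hT, aeval_diagonal_aux]
      have hev : (fun i => (Lagrange.basis Finset.univ (fun s : ι => q ^ e s) t).eval
          (q ^ e i)) = fun i => if i = t then (1 : F) else 0 := by
        funext i
        rcases eq_or_ne i t with hit | hit
        · rw [hit, if_pos rfl]
          exact Lagrange.eval_basis_self dinj (Finset.mem_univ t)
        · rw [if_neg hit]
          exact Lagrange.eval_basis_of_ne (v := fun s : ι => q ^ e s) (Ne.symm hit) (Finset.mem_univ i)
      rw [hev]
      ext i j
      rcases eq_or_ne i j with hij | hij
      · subst hij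
        rcases eq_or_ne i t with hit | hit
        · subst hit
          simp [Matrix.single]
        · simp [Matrix.single, hit, Ne.symm hit]
      · rw [Matrix.diagonal_apply_ne _ hij]
        exact (Matrix.single_apply_of_ne _ _ _ _ _
          (by rintro ⟨rfl, rfl⟩; exact hij rfl)).symm
    rw [← heq]
    exact hmem
  -- off-diagonal matrix units
  have Eoff : ∀ t s, t ≠ s → Matrix.single t s (1 : F)
      ∈ Algebra.adjoin F ({A, T} : Set (Matrix ι ι F)) := by
    intro t s hts
    have h1 : Matrix.single t t (1 : F) * A * Matrix.single s s (1 : F)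
        = Matrix.single t s (A t s) := by
      ext i j
      rcases eq_or_ne i t with hit | hit
      · subst hit
        rcases eq_or_ne j s with hjs | hjs
        · subst hjs
          rw [Matrix.mul_single_apply_same,
            Matrix.single_mul_apply_same, Matrix.single_apply_same,
            one_mul, mul_one]
        · rw [Matrix.mul_single_apply_of_ne _ _ _ _ _ hjs,
            Matrix.single_apply_of_ne _ _ _ _ _
              (by rintro ⟨-, rfl⟩; exact hjs rfl)]
      · rw [Matrix.mul_apply,
          Matrix.single_apply_of_ne _ _ _ _ _ (by rintro ⟨rfl, -⟩; exact hit rfl)]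
        refine Finset.sum_eq_zero fun k _ => ?_
        rw [Matrix.single_mul_apply_of_ne _ _ _ _ _ hit, zero_mul]
    have h2 : Matrix.single t s (A t s)
        ∈ Algebra.adjoin F ({A, T} : Set (Matrix ι ι F)) := by
      rw [← h1]
      exact Subalgebra.mul_mem _ (Subalgebra.mul_mem _ (Ediag t) hAmem) (Ediag s)
    have h3 := Subalgebra.smul_mem _ h2 (A t s)⁻¹
    rwa [Matrix.smul_single, smul_eq_mul, inv_mul_cancel₀ (Aoff t s hts)] at h3
  -- conclude
  rw [eq_top_iff]
  intro M _
  rw [Matrix.matrix_eq_sum_single M]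
  refine Subalgebra.sum_mem _ fun i _ => Subalgebra.sum_mem _ fun j _ => ?_
  have hsm : Matrix.single i j (M i j)
      = M i j • Matrix.single i j (1 : F) := by
    rw [Matrix.smul_single, smul_eq_mul, mul_one]
  rw [hsm]
  rcases eq_or_ne i j with hij | hij
  · subst hij
    exact Subalgebra.smul_mem _ (Ediag i) _
  · exact Subalgebra.smul_mem _ (Eoff i j hij) _
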